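/- Under the hypotheses of the alternative theorem for sequences satisfying property (H) at $\hat{x}$, if additionally there exists $w \in E$ with $\sup_{n \geq 1} D^+ h_n(\hat{x})(w) < 0$, and if $(\alpha_\infty, \alpha_0, \alpha_1, \ldots)$ are nonnegative reals with $\alpha_\infty + \sum_n \alpha_n = 1$ satisfying $\alpha_\infty D^+ h_\infty(\hat{x})(u) + \sum_{n \geq 0} \alpha_n D^+ h_n(\hat{x})(u) \geq 0$ for all $u \in E$, then $\alpha_0 \neq 0$. -/

import Mathlib

open Filter Topology

/-- Upper Dini derivative of `f` at `x` in direction `u`. -/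
noncomputable def dini {E : Type*} [NormedAddCommGroup E] [NormedSpace ℝ E]
    (f : E → ℝ) (x u : E) : ℝ :=
  Filter.limsup (fun t : ℝ => (f (x + t • u) - f x) / t) (𝓝[>] (0 : ℝ))

theorem stmt_14 {E : Type*} [NormedAddCommGroup E] [NormedSpace ℝ E]
    (Ω : Set E) (hΩ : IsOpen Ω) (xh : E) (hxh : xh ∈ Ω) (r : ℝ) (hr : 0 < r)
    (h : ℕ → E → ℝ) (hinf : E → ℝ)
    (hlip : ∀ n, ∃ K : ℝ, ∀ y ∈ Metric.ball xh r ∩ Ω, ∀ z ∈ Metric.ball xh r ∩ Ω,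
      |h n y - h n z| ≤ K * ‖y - z‖)
    (hsub : ∀ n, (∀ u v : E, dini (h n) xh (u + v) ≤ dini (h n) xh u + dini (h n) xh v) ∧
      (∀ u : E, ∀ c : ℝ, 0 ≤ c → dini (h n) xh (c • u) = c * dini (h n) xh u))
    (hlipinf : ∃ K : ℝ, ∀ y ∈ Metric.ball xh r ∩ Ω, ∀ z ∈ Metric.ball xh r ∩ Ω,
      |hinf y - hinf z| ≤ K * ‖y - z‖)
    (hval : Tendsto (fun n => h n xh) atTop (𝓝 (hinf xh)))
    (hsem : ∀ ε > 0, ∃ N : ℕ, ∀ n ≥ N,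
      ∀ y ∈ Metric.ball xh r ∩ Ω, ∀ z ∈ Metric.ball xh r ∩ Ω,
        |(h n y - hinf y) - (h n z - hinf z)| ≤ ε * ‖y - z‖)
    -- there exists `w` with `sup_{n ≥ 1} D⁺ h n (xh)(w) < 0`
    (w : E) (hw : ∃ c < (0 : ℝ), ∀ n ≥ 1, dini (h n) xh w ≤ c)
    -- the multipliers
    (αinf : ℝ) (α : ℕ → ℝ) (hαinf : 0 ≤ αinf) (hα : ∀ n, 0 ≤ α n)
    (hαsum : Summable α) (hone : αinf + ∑' n, α n = 1)
    (hineq : ∀ u : E, 0 ≤ αinf * dini hinf xh u + ∑' n, α n * dini (h n) xh u) :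
    α 0 ≠ 0 := by
  obtain ⟨c, hc0, hcle⟩ := hw
  set s : Set E := Metric.ball xh r ∩ Ω with hs
  have hxs : xh ∈ s := ⟨Metric.mem_ball_self hr, hxh⟩
  have hsopen : IsOpen s := Metric.isOpen_ball.inter hΩ
  -- eventually the point xh + t • w lies in s
  have hev : ∀ᶠ t in 𝓝[>] (0 : ℝ), xh + t • w ∈ s := by
    have hcont : Continuous fun t : ℝ => xh + t • w := by continuity
    have h0 : Tendsto (fun t : ℝ => xh + t • w) (𝓝 0) (𝓝 xh) := by
      simpa using hcont.tendsto 0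
    exact (nhdsWithin_le_nhds (h0.eventually (hsopen.eventually_mem hxs)))
  -- difference quotient bound from a Lipschitz bound on s
  have bound : ∀ (f : E → ℝ) (K : ℝ),
      (∀ y ∈ s, ∀ z ∈ s, |f y - f z| ≤ K * ‖y - z‖) →
      ∀ᶠ t in 𝓝[>] (0 : ℝ), |(f (xh + t • w) - f xh) / t| ≤ K * ‖w‖ := by
    intro f K hf
    filter_upwards [hev, self_mem_nhdsWithin] with t hts ht0
    have ht : (0 : ℝ) < t := ht0
    have hb := hf _ hts _ hxs
    have hnorm : ‖xh + t • w - xh‖ = t * ‖w‖ := by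
      simp [norm_smul, abs_of_pos ht]
    rw [abs_div, abs_of_pos ht, div_le_iff₀ ht]
    calc |f (xh + t • w) - f xh| ≤ K * ‖xh + t • w - xh‖ := hb
      _ = K * ‖w‖ * t := by rw [hnorm]; ring
  -- absolute bound on dini from a Lipschitz bound on s
  have dini_abs : ∀ (f : E → ℝ) (K : ℝ),
      (∀ y ∈ s, ∀ z ∈ s, |f y - f z| ≤ K * ‖y - z‖) →
      |dini f xh w| ≤ K * ‖w‖ := by
    intro f K hf
    have hb := bound f K hf
    have hub : ∀ᶠ t in 𝓝[>] (0:ℝ), (f (xh + t • w) - f xh) / t ≤ K * ‖w‖ :=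
      hb.mono fun t ht => (abs_le.mp ht).2
    have hlb : ∀ᶠ t in 𝓝[>] (0:ℝ), -(K * ‖w‖) ≤ (f (xh + t • w) - f xh) / t :=
      hb.mono fun t ht => (abs_le.mp ht).1
    have h1 : dini f xh w ≤ K * ‖w‖ :=
      limsup_le_of_le (isCoboundedUnder_le_of_eventually_le _ hlb) hub
    have h2 : -(K * ‖w‖) ≤ dini f xh w :=
      le_limsup_of_frequently_le hlb.frequently (isBoundedUnder_of_eventually_le hub)
    exact abs_le.mpr ⟨h2, h1⟩
  -- dini hinf xh w ≤ c
  obtain ⟨Kinf, hKinf⟩ := hlipinf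
  have hdinf : dini hinf xh w ≤ c := by
    refine le_of_forall_pos_le_add fun ε hε => ?_
    set ε₁ : ℝ := ε / (2 * (‖w‖ + 1)) with hε₁def
    have hwpos : (0:ℝ) < ‖w‖ + 1 := by positivity
    have hε₁ : 0 < ε₁ := by positivity
    obtain ⟨N, hN⟩ := hsem ε₁ hε₁
    set n := max N 1 with hn
    obtain ⟨Kn, hKn⟩ := hlip n
    -- eventually DQ hinf t ≤ DQ (h n) t + ε₁ * ‖w‖
    have hdq : ∀ᶠ t in 𝓝[>] (0:ℝ),
        (hinf (xh + t • w) - hinf xh) / t ≤ (h n (xh + t • w) - h n xh) / t + ε₁ * ‖w‖ := by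
      filter_upwards [hev, self_mem_nhdsWithin] with t hts ht0
      have ht : (0:ℝ) < t := ht0
      have hb := hN n (le_max_left _ _) _ hts _ hxs
      have hnorm : ‖xh + t • w - xh‖ = t * ‖w‖ := by
        simp [norm_smul, abs_of_pos ht]
      have : (h n (xh + t • w) - hinf (xh + t • w)) - (h n xh - hinf xh) ≥ -(ε₁ * ‖w‖ * t) := by
        have := (abs_le.mp (by rw [hnorm] at hb; calc
          |(h n (xh + t • w) - hinf (xh + t • w)) - (h n xh - hinf xh)| ≤ ε₁ * (t * ‖w‖) := hb
          _ = ε₁ * ‖w‖ * t := by ring)).1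
        linarith
      rw [div_add' _ _ _ (ne_of_gt ht), div_le_div_iff₀ ht ht]
      have hexp : (h n (xh + t • w) - h n xh + ε₁ * ‖w‖ * t) * t - (hinf (xh + t • w) - hinf xh) * t
          = ((h n (xh + t • w) - hinf (xh + t • w)) - (h n xh - hinf xh) + ε₁ * ‖w‖ * t) * t := by
        ring
      nlinarith [this, ht]
    -- eventually DQ (h n) t < c + ε/2
    have hbddn : Filter.IsBoundedUnder (· ≤ ·) (𝓝[>] (0:ℝ))
        (fun t => (h n (xh + t • w) - h n xh) / t) :=
      isBoundedUnder_of_eventually_le ((bound (h n) Kn hKn).mono fun t ht => (abs_le.mp ht).2)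
    have hlimn : dini (h n) xh w < c + ε / 2 := lt_of_le_of_lt (hcle n (le_max_right _ _)) (by linarith)
    have hevn : ∀ᶠ t in 𝓝[>] (0:ℝ), (h n (xh + t • w) - h n xh) / t < c + ε / 2 :=
      eventually_lt_of_limsup_lt hlimn hbddn
    -- conclude
    have hεw : ε₁ * ‖w‖ ≤ ε / 2 := by
      rw [hε₁def, div_mul_eq_mul_div, div_le_div_iff₀ (by positivity) (by norm_num)]
      nlinarith [norm_nonneg w, hε.le]
    have hfinal : ∀ᶠ t in 𝓝[>] (0:ℝ), (hinf (xh + t • w) - hinf xh) / t ≤ c + ε := by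
      filter_upwards [hdq, hevn] with t h1 h2
      linarith
    have hlbinf : ∀ᶠ t in 𝓝[>] (0:ℝ),
        -(Kinf * ‖w‖) ≤ (hinf (xh + t • w) - hinf xh) / t :=
      (bound hinf Kinf hKinf).mono fun t ht => (abs_le.mp ht).1
    exact limsup_le_of_le (isCoboundedUnder_le_of_eventually_le _ hlbinf) hfinal
  -- summability of the series
  have hM : ∃ M : ℝ, ∀ᶠ n in Filter.cofinite, |dini (h n) xh w| ≤ M := by
    obtain ⟨N, hN⟩ := hsem 1 one_pos
    refine ⟨(Kinf + 1) * ‖w‖, ?_⟩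
    rw [Nat.cofinite_eq_atTop, Filter.eventually_atTop]
    refine ⟨N, fun n hn => ?_⟩
    refine dini_abs (h n) (Kinf + 1) fun y hy z hz => ?_
    have h1 := hN n hn y hy z hz
    have h2 := hKinf y hy z hz
    have : |h n y - h n z| ≤ |(h n y - hinf y) - (h n z - hinf z)| + |hinf y - hinf z| := by
      have := abs_add_le ((h n y - hinf y) - (h n z - hinf z)) (hinf y - hinf z)
      calc |h n y - h n z| = |((h n y - hinf y) - (h n z - hinf z)) + (hinf y - hinf z)| := by
            ring_nf
        _ ≤ _ := this
    calc |h n y - h n z| ≤ 1 * ‖y - z‖ + Kinf * ‖y - z‖ := by linarith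
      _ = (Kinf + 1) * ‖y - z‖ := by ring
  obtain ⟨M, hMev⟩ := hM
  have hsummable : Summable (fun n => α n * dini (h n) xh w) := by
    refine Summable.of_norm_bounded_eventually (g := fun n => α n * |M|) (hαsum.mul_right _) ?_
    filter_upwards [hMev] with n hn
    rw [Real.norm_eq_abs, abs_mul, abs_of_nonneg (hα n)]
    exact mul_le_mul_of_nonneg_left (hn.trans (le_abs_self M)) (hα n)
  -- now the main argument
  intro hα0
  have hterm : ∀ n, α n * dini (h n) xh w ≤ α n * c := by
    intro n
    rcases Nat.eq_zero_or_pos n with hn | hn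
    · subst hn; rw [hα0]; simp
    · exact mul_le_mul_of_nonneg_left (hcle n hn) (hα n)
  have hsum_le : (∑' n, α n * dini (h n) xh w) ≤ ∑' n, α n * c :=
    Summable.tsum_le_tsum hterm hsummable (hαsum.mul_right _)
  have hsum_c : (∑' n, α n * c) = (∑' n, α n) * c := by
    rw [tsum_mul_right]
  have hmain := hineq w
  have h1 : αinf * dini hinf xh w ≤ αinf * c := mul_le_mul_of_nonneg_left hdinf hαinf
  have h2 : αinf * c + (∑' n, α n) * c = c := by
    rw [← add_mul, hone, one_mul]
  nlinarith [hmain, h1, hsum_le, hsum_c]
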